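/- arXiv:2405.08095 — 4 statements merged into one kernel-verified Lean document; each statement's English description precedes it below -/
import Mathlib

section
/- If H is a linear operator on ℂⁿ and there exists a Hermitian positive-definite operator G with H†G = GH, then every eigenvalue of H is real. -/
open Matrix ComplexOrder

/-- If H admits a Hermitian positive-definite G with H†G = GH, then every
eigenvalue of H is real. -/
theorem stmt1 (n : ℕ) (H G : Matrix (Fin n) (Fin n) ℂ) (hG : G.PosDef)
    (h : Hᴴ * G = G * H) :
    ∀ μ : ℂ, μ ∈ spectrum ℂ H → μ.im = 0 := by
  intro μ hμ
  rw [spectrum.mem_iff] at hμ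
  -- get eigenvector
  have hdet : (algebraMap ℂ (Matrix (Fin n) (Fin n) ℂ) μ - H).det = 0 := by
    by_contra hd
    exact hμ ((Matrix.isUnit_iff_isUnit_det _).2 (Ne.isUnit hd))
  obtain ⟨v, hv, hv0⟩ := (Matrix.exists_mulVec_eq_zero_iff).2 hdet
  have hev : H *ᵥ v = μ • v := by
    have := sub_mulVec (algebraMap ℂ (Matrix (Fin n) (Fin n) ℂ) μ) H v
    rw [hv0] at this
    have h2 : (algebraMap ℂ (Matrix (Fin n) (Fin n) ℂ) μ) *ᵥ v = μ • v := by
      simp [Algebra.algebraMap_eq_smul_one, Matrix.smul_mulVec]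
    have := (sub_eq_zero.mp this.symm)
    rw [h2] at this
    exact this.symm
  set c : ℂ := star v ⬝ᵥ G *ᵥ v with hc
  have hcpos : 0 < c := hG.dotProduct_mulVec_pos hv
  have hcne : c ≠ 0 := ne_of_gt hcpos
  have key : (starRingEnd ℂ) μ * c = μ * c := by
    have lhs : star v ⬝ᵥ (Hᴴ * G) *ᵥ v = (starRingEnd ℂ) μ * c := by
      rw [← mulVec_mulVec, Matrix.dotProduct_mulVec, ← Matrix.star_mulVec, hev]
      simp [hc, Matrix.dotProduct_mulVec, mul_comm, smul_eq_mul, star_smul,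
        smul_dotProduct, Matrix.smul_vecMul]
    have rhs : star v ⬝ᵥ (G * H) *ᵥ v = μ * c := by
      rw [← mulVec_mulVec, hev]
      simp [hc, Matrix.mulVec_smul, smul_eq_mul, mul_comm]
    rw [← lhs, ← rhs, h]
  have hmu : (starRingEnd ℂ) μ = μ := mul_right_cancel₀ hcne key
  have := congrArg Complex.im hmu
  simp [Complex.conj_im] at this
  linarith
end

section
/- Let U be a unitary on ℂᵐ ⊗ ℂⁿ such that for every operator A on ℂᵐ there exists an operator A' on ℂᵐ with U(A ⊗ 1)U† = A' ⊗ 1, and for every operator B on ℂⁿ there exists B' with U(1 ⊗ B)U† = 1 ⊗ B'. Then U = U₁ ⊗ U₂ for some unitaries U₁ on ℂᵐ and U₂ on ℂⁿ (up to a global phase). -/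
open Matrix Kronecker

section Aux

lemma kron_ct {k l p q : Type*} [Fintype k] [Fintype l] [Fintype p] [Fintype q]
    (A : Matrix k l ℂ) (B : Matrix p q ℂ) : (A ⊗ₖ B)ᴴ = Aᴴ ⊗ₖ Bᴴ := by
  ext i j
  simp [Matrix.conjTranspose_apply, Matrix.kroneckerMap_apply, mul_comm]

lemma std_ct {k : Type*} [DecidableEq k] (i j : k) :
    (Matrix.single i j (1 : ℂ))ᴴ = Matrix.single j i 1 := by
  ext a b
  simp only [Matrix.conjTranspose_apply, Matrix.single, Matrix.of_apply]
  split_ifs with h1 h2 h2 <;> simp_all <;> tauto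

/-- Skolem–Noether style: a ∗-multiplicative map on matrix units is implemented by a unitary. -/
lemma inner_aux {k : ℕ} (hk : 0 < k)
    (φ : Matrix (Fin k) (Fin k) ℂ → Matrix (Fin k) (Fin k) ℂ)
    (hmul : ∀ A B, φ (A * B) = φ A * φ B)
    (hstar : ∀ A, φ Aᴴ = (φ A)ᴴ)
    (hzero : φ 0 = 0)
    (hne : φ (Matrix.single ⟨0, hk⟩ ⟨0, hk⟩ 1) ≠ 0) :
    ∃ V : Matrix (Fin k) (Fin k) ℂ, V ∈ Matrix.unitaryGroup (Fin k) ℂ ∧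
      ∀ i j : Fin k,
        φ (Matrix.single i j 1) * V = V * Matrix.single i j 1 := by
  set z : Fin k := ⟨0, hk⟩ with hz
  set f : Matrix (Fin k) (Fin k) ℂ := φ (Matrix.single z z 1) with hf
  have hf2 : f * f = f := by
    rw [hf, ← hmul]
    congr 1
    simpa using Matrix.single_mul_single_same (c := (1 : ℂ)) z z z 1
  -- find a fixed vector of f
  have hw : ∃ w : Fin k → ℂ, f *ᵥ w ≠ 0 := by
    by_contra h
    push_neg at h
    apply hne
    ext i j
    have := congrFun (h (Pi.single j 1)) i
    simpa [Matrix.mulVec, dotProduct, Pi.single_apply] using this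
  obtain ⟨w, hwne⟩ := hw
  set v : Fin k → ℂ := f *ᵥ w with hvdef
  have hv : f *ᵥ v = v := by rw [hvdef, Matrix.mulVec_mulVec, hf2]
  -- the norm square
  set cr : ℝ := ∑ i, Complex.normSq (v i) with hcrdef
  have hcrpos : 0 < cr := by
    have : ∃ i, v i ≠ 0 := by
      by_contra h
      push_neg at h
      exact hwne (funext fun i => h i)
    obtain ⟨i, hi⟩ := this
    refine Finset.sum_pos' (fun j _ => Complex.normSq_nonneg _) ⟨i, Finset.mem_univ i, ?_⟩
    exact Complex.normSq_pos.mpr hi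
  have hc : star v ⬝ᵥ v = (cr : ℂ) := by
    rw [hcrdef]
    push_cast
    simp only [dotProduct, Pi.star_apply]
    refine Finset.sum_congr rfl fun i _ => ?_
    rw [Complex.star_def, mul_comm, Complex.mul_conj]
  set s : ℝ := (Real.sqrt cr)⁻¹ with hsdef
  have hs2 : (s : ℂ) * (s : ℂ) * (cr : ℂ) = 1 := by
    have h1 : s * s * cr = 1 := by
      rw [hsdef, ← Real.sqrt_mul_self hcrpos.le]
      have hx : Real.sqrt cr ≠ 0 := by positivity
      field_simp
      rw [Real.sq_sqrt (Real.sqrt_nonneg _)]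
    rw [show (s : ℂ) * (s : ℂ) * (cr : ℂ) = ((s * s * cr : ℝ) : ℂ) by push_cast; ring, h1,
      Complex.ofReal_one]
  -- the key dot product computation
  have hdot : ∀ b b' : Fin k,
      star (φ (Matrix.single b z 1) *ᵥ v) ⬝ᵥ (φ (Matrix.single b' z 1) *ᵥ v)
        = if b = b' then (cr : ℂ) else 0 := by
    intro b b'
    rw [Matrix.star_mulVec, Matrix.dotProduct_mulVec, Matrix.vecMul_vecMul,
      ← hstar, std_ct, ← hmul]
    by_cases hbb : b = b'
    · subst hbb
      rw [Matrix.single_mul_single_same, one_mul, ← hf, ← Matrix.dotProduct_mulVec, hv, hc,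
        if_pos rfl]
    · rw [Matrix.single_mul_single_of_ne _ _ _ _ hbb, hzero, Matrix.vecMul_zero,
        zero_dotProduct, if_neg hbb]
  -- the unitary
  set V : Matrix (Fin k) (Fin k) ℂ :=
    Matrix.of fun a b => (s : ℂ) * (φ (Matrix.single b z 1) *ᵥ v) a with hV
  have hVapp : ∀ a b, V a b = (s : ℂ) * (φ (Matrix.single b z 1) *ᵥ v) a :=
    fun a b => rfl
  have hVV : Vᴴ * V = 1 := by
    ext a b
    have : (Vᴴ * V) a b
        = (s : ℂ) * (s : ℂ) * (star (φ (Matrix.single a z 1) *ᵥ v)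
            ⬝ᵥ (φ (Matrix.single b z 1) *ᵥ v)) := by
      simp only [Matrix.mul_apply, Matrix.conjTranspose_apply, hVapp, dotProduct,
        Pi.star_apply, star_mul', Complex.star_def, Complex.conj_ofReal, Finset.mul_sum]
      refine Finset.sum_congr rfl fun x _ => ?_
      ring
    rw [this, hdot]
    by_cases hab : a = b
    · subst hab
      simpa [Matrix.one_apply] using hs2
    · simp [hab, Matrix.one_apply]
  refine ⟨V, Matrix.mem_unitaryGroup_iff'.mpr (by rwa [Matrix.star_eq_conjTranspose]), ?_⟩
  intro i j
  have hcol : ∀ (M : Matrix (Fin k) (Fin k) ℂ) a b,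
      (M * V) a b = (s : ℂ) * ((M * φ (Matrix.single b z 1)) *ᵥ v) a := by
    intro M a b
    rw [← Matrix.mulVec_mulVec]
    simp only [Matrix.mul_apply, hVapp, Matrix.mulVec, dotProduct, Finset.mul_sum]
    refine Finset.sum_congr rfl fun x _ => Finset.sum_congr rfl fun y _ => ?_
    ring
  ext a b
  rw [hcol, ← hmul]
  by_cases hjb : j = b
  · subst hjb
    rw [Matrix.single_mul_single_same, one_mul,
      Matrix.mul_single_apply_same, mul_one, hVapp]
  · rw [Matrix.single_mul_single_of_ne _ _ _ _ hjb, hzero, Matrix.zero_mulVec,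
      Matrix.mul_single_apply_of_ne (c := 1) i j a b (Ne.symm hjb)]
    simp

end Aux

/-- A unitary on ℂᵐ ⊗ ℂⁿ whose conjugation preserves both local operator
algebras B(ℂᵐ)⊗1 and 1⊗B(ℂⁿ) is a tensor product of local unitaries. -/
theorem stmt11 (m n : ℕ) (hm : 2 ≤ m) (hn : 2 ≤ n)
    (U : Matrix (Fin m × Fin n) (Fin m × Fin n) ℂ)
    (hU : U ∈ Matrix.unitaryGroup (Fin m × Fin n) ℂ)
    (hA : ∀ A : Matrix (Fin m) (Fin m) ℂ, ∃ A' : Matrix (Fin m) (Fin m) ℂ,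
      U * (A ⊗ₖ (1 : Matrix (Fin n) (Fin n) ℂ)) * Uᴴ
        = A' ⊗ₖ (1 : Matrix (Fin n) (Fin n) ℂ))
    (hB : ∀ B : Matrix (Fin n) (Fin n) ℂ, ∃ B' : Matrix (Fin n) (Fin n) ℂ,
      U * ((1 : Matrix (Fin m) (Fin m) ℂ) ⊗ₖ B) * Uᴴ
        = (1 : Matrix (Fin m) (Fin m) ℂ) ⊗ₖ B') :
    ∃ (U₁ : Matrix (Fin m) (Fin m) ℂ) (U₂ : Matrix (Fin n) (Fin n) ℂ),
      U₁ ∈ Matrix.unitaryGroup (Fin m) ℂ ∧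
      U₂ ∈ Matrix.unitaryGroup (Fin n) ℂ ∧
      U = U₁ ⊗ₖ U₂ := by
  have hm0 : 0 < m := by omega
  have hn0 : 0 < n := by omega
  have hUl : Uᴴ * U = 1 := by
    have := Matrix.mem_unitaryGroup_iff'.mp hU
    rwa [Matrix.star_eq_conjTranspose] at this
  have hUr : U * Uᴴ = 1 := by
    have := Matrix.mem_unitaryGroup_iff.mp hU
    rwa [Matrix.star_eq_conjTranspose] at this
  -- injectivity of tensoring with 1
  have kinjA : ∀ {A B : Matrix (Fin m) (Fin m) ℂ},
      A ⊗ₖ (1 : Matrix (Fin n) (Fin n) ℂ) = B ⊗ₖ 1 → A = B := by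
    intro A B h
    ext i j
    have := Matrix.ext_iff.mpr h (i, ⟨0, hn0⟩) (j, ⟨0, hn0⟩)
    simpa [Matrix.kroneckerMap_apply] using this
  have kinjB : ∀ {A B : Matrix (Fin n) (Fin n) ℂ},
      (1 : Matrix (Fin m) (Fin m) ℂ) ⊗ₖ A = 1 ⊗ₖ B → A = B := by
    intro A B h
    ext i j
    have := Matrix.ext_iff.mpr h (⟨0, hm0⟩, i) (⟨0, hm0⟩, j)
    simpa [Matrix.kroneckerMap_apply] using this
  -- conjugation is injective
  have conjInj : ∀ {X Y : Matrix (Fin m × Fin n) (Fin m × Fin n) ℂ},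
      U * X * Uᴴ = U * Y * Uᴴ → X = Y := by
    intro X Y h
    have h2 := congrArg (fun Z => Uᴴ * Z * U) h
    simp only [Matrix.mul_assoc] at h2
    rw [hUl] at h2
    simp only [Matrix.mul_one] at h2
    simp only [← Matrix.mul_assoc] at h2
    rw [hUl] at h2
    simp only [Matrix.one_mul] at h2
    exact h2
  set φ : Matrix (Fin m) (Fin m) ℂ → Matrix (Fin m) (Fin m) ℂ :=
    fun A => Classical.choose (hA A) with hφdef
  have hφ : ∀ A, U * (A ⊗ₖ (1 : Matrix (Fin n) (Fin n) ℂ)) * Uᴴ = φ A ⊗ₖ 1 :=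
    fun A => Classical.choose_spec (hA A)
  set ψ : Matrix (Fin n) (Fin n) ℂ → Matrix (Fin n) (Fin n) ℂ :=
    fun B => Classical.choose (hB B) with hψdef
  have hψ : ∀ B, U * ((1 : Matrix (Fin m) (Fin m) ℂ) ⊗ₖ B) * Uᴴ = 1 ⊗ₖ ψ B :=
    fun B => Classical.choose_spec (hB B)
  -- properties of φ
  have hconj : ∀ X Y : Matrix (Fin m × Fin n) (Fin m × Fin n) ℂ,
      (U * X * Uᴴ) * (U * Y * Uᴴ) = U * (X * Y) * Uᴴ := by
    intro X Y
    calc U * X * Uᴴ * (U * Y * Uᴴ) = U * (X * ((Uᴴ * U) * (Y * Uᴴ))) := by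
          simp only [Matrix.mul_assoc]
      _ = U * (X * Y) * Uᴴ := by
          rw [hUl, Matrix.one_mul]
          simp only [Matrix.mul_assoc]
  have hφmul : ∀ A B, φ (A * B) = φ A * φ B := by
    intro A B
    apply kinjA
    have hAB : (A ⊗ₖ (1 : Matrix (Fin n) (Fin n) ℂ)) * (B ⊗ₖ 1) = (A * B) ⊗ₖ 1 := by
      rw [← Matrix.mul_kronecker_mul, Matrix.one_mul]
    rw [← hφ, ← hAB, ← hconj, hφ, hφ, ← Matrix.mul_kronecker_mul, Matrix.one_mul]
  have hφstar : ∀ A, φ Aᴴ = (φ A)ᴴ := by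
    intro A
    apply kinjA
    have h1 : (φ A ⊗ₖ (1 : Matrix (Fin n) (Fin n) ℂ))ᴴ = (φ A)ᴴ ⊗ₖ 1 := by
      rw [kron_ct, Matrix.conjTranspose_one]
    rw [← hφ, ← h1, ← hφ, Matrix.conjTranspose_mul, Matrix.conjTranspose_mul,
      Matrix.conjTranspose_conjTranspose, kron_ct, Matrix.conjTranspose_one, Matrix.mul_assoc]
  have hφzero : φ 0 = 0 := by
    apply kinjA
    rw [← hφ, Matrix.zero_kronecker, Matrix.mul_zero, Matrix.zero_mul]
  have hφne : φ (Matrix.single (⟨0, hm0⟩ : Fin m) (⟨0, hm0⟩ : Fin m) (1 : ℂ)) ≠ 0 := by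
    intro h
    have h2 : (Matrix.single (⟨0, hm0⟩ : Fin m) (⟨0, hm0⟩ : Fin m) (1 : ℂ)) ⊗ₖ
        (1 : Matrix (Fin n) (Fin n) ℂ) = 0 := by
      apply conjInj
      rw [hφ, h, Matrix.zero_kronecker, Matrix.mul_zero, Matrix.zero_mul]
    have := Matrix.ext_iff.mpr h2 (⟨0, hm0⟩, ⟨0, hn0⟩) (⟨0, hm0⟩, ⟨0, hn0⟩)
    simpa [Matrix.kroneckerMap_apply] using this
  -- properties of ψ
  have hψmul : ∀ A B, ψ (A * B) = ψ A * ψ B := by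
    intro A B
    apply kinjB
    have hAB : ((1 : Matrix (Fin m) (Fin m) ℂ) ⊗ₖ A) * (1 ⊗ₖ B) = 1 ⊗ₖ (A * B) := by
      rw [← Matrix.mul_kronecker_mul, Matrix.one_mul]
    rw [← hψ, ← hAB, ← hconj, hψ, hψ, ← Matrix.mul_kronecker_mul, Matrix.one_mul]
  have hψstar : ∀ A, ψ Aᴴ = (ψ A)ᴴ := by
    intro A
    apply kinjB
    have h1 : ((1 : Matrix (Fin m) (Fin m) ℂ) ⊗ₖ ψ A)ᴴ = 1 ⊗ₖ (ψ A)ᴴ := by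
      rw [kron_ct, Matrix.conjTranspose_one]
    rw [← hψ, ← h1, ← hψ, Matrix.conjTranspose_mul, Matrix.conjTranspose_mul,
      Matrix.conjTranspose_conjTranspose, kron_ct, Matrix.conjTranspose_one, Matrix.mul_assoc]
  have hψzero : ψ 0 = 0 := by
    apply kinjB
    rw [← hψ, Matrix.kronecker_zero, Matrix.mul_zero, Matrix.zero_mul]
  have hψne : ψ (Matrix.single (⟨0, hn0⟩ : Fin n) (⟨0, hn0⟩ : Fin n) (1 : ℂ)) ≠ 0 := by
    intro h
    have h2 : (1 : Matrix (Fin m) (Fin m) ℂ) ⊗ₖ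
        (Matrix.single (⟨0, hn0⟩ : Fin n) (⟨0, hn0⟩ : Fin n) (1 : ℂ)) = 0 := by
      apply conjInj
      rw [hψ, h, Matrix.kronecker_zero, Matrix.mul_zero, Matrix.zero_mul]
    have := Matrix.ext_iff.mpr h2 (⟨0, hm0⟩, ⟨0, hn0⟩) (⟨0, hm0⟩, ⟨0, hn0⟩)
    simpa [Matrix.kroneckerMap_apply] using this
  obtain ⟨V, hVmem, hVint⟩ := inner_aux hm0 φ hφmul hφstar hφzero hφne
  obtain ⟨W, hWmem, hWint⟩ := inner_aux hn0 ψ hψmul hψstar hψzero hψne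
  have hVl : Vᴴ * V = 1 := by
    have := Matrix.mem_unitaryGroup_iff'.mp hVmem
    rwa [Matrix.star_eq_conjTranspose] at this
  have hVr : V * Vᴴ = 1 := by
    have := Matrix.mem_unitaryGroup_iff.mp hVmem
    rwa [Matrix.star_eq_conjTranspose] at this
  have hWl : Wᴴ * W = 1 := by
    have := Matrix.mem_unitaryGroup_iff'.mp hWmem
    rwa [Matrix.star_eq_conjTranspose] at this
  have hWr : W * Wᴴ = 1 := by
    have := Matrix.mem_unitaryGroup_iff.mp hWmem
    rwa [Matrix.star_eq_conjTranspose] at this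
  set X : Matrix (Fin m × Fin n) (Fin m × Fin n) ℂ := (V ⊗ₖ W)ᴴ * U with hXdef
  -- X commutes with E ⊗ 1
  have hcomm1 : ∀ i j : Fin m,
      X * (Matrix.single i j 1 ⊗ₖ (1 : Matrix (Fin n) (Fin n) ℂ))
        = (Matrix.single i j 1 ⊗ₖ 1) * X := by
    intro i j
    set E := Matrix.single i j (1 : ℂ)
    have hUE : U * (E ⊗ₖ (1 : Matrix (Fin n) (Fin n) ℂ)) = (φ E ⊗ₖ 1) * U := by
      have := congrArg (fun Z => Z * U) (hφ E)
      simpa only [Matrix.mul_assoc, hUl, Matrix.mul_one] using this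
    have hVE : Vᴴ * φ E = E * Vᴴ := by
      calc Vᴴ * φ E = Vᴴ * (φ E * V) * Vᴴ := by
            rw [Matrix.mul_assoc, Matrix.mul_assoc, hVr, Matrix.mul_one]
        _ = (Vᴴ * V) * (E * Vᴴ) := by rw [hVint]; simp only [Matrix.mul_assoc]; rfl
        _ = E * Vᴴ := by rw [hVl, Matrix.one_mul]
    calc X * (E ⊗ₖ 1) = (V ⊗ₖ W)ᴴ * (U * (E ⊗ₖ 1)) := by rw [hXdef, Matrix.mul_assoc]
      _ = ((Vᴴ * φ E) ⊗ₖ (Wᴴ * 1)) * U := by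
          rw [hUE, kron_ct, ← Matrix.mul_assoc, Matrix.mul_kronecker_mul]
      _ = ((E * Vᴴ) ⊗ₖ (1 * Wᴴ)) * U := by rw [hVE, Matrix.mul_one, Matrix.one_mul]
      _ = (E ⊗ₖ 1) * X := by
          rw [Matrix.mul_kronecker_mul, hXdef, kron_ct, Matrix.mul_assoc]
  have hcomm2 : ∀ k l : Fin n,
      X * ((1 : Matrix (Fin m) (Fin m) ℂ) ⊗ₖ Matrix.single k l 1)
        = (1 ⊗ₖ Matrix.single k l 1) * X := by
    intro k l
    set F := Matrix.single k l (1 : ℂ)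
    have hUF : U * ((1 : Matrix (Fin m) (Fin m) ℂ) ⊗ₖ F) = (1 ⊗ₖ ψ F) * U := by
      have := congrArg (fun Z => Z * U) (hψ F)
      simpa only [Matrix.mul_assoc, hUl, Matrix.mul_one] using this
    have hWF : Wᴴ * ψ F = F * Wᴴ := by
      calc Wᴴ * ψ F = Wᴴ * (ψ F * W) * Wᴴ := by
            rw [Matrix.mul_assoc, Matrix.mul_assoc, hWr, Matrix.mul_one]
        _ = (Wᴴ * W) * (F * Wᴴ) := by rw [hWint]; simp only [Matrix.mul_assoc]; rfl
        _ = F * Wᴴ := by rw [hWl, Matrix.one_mul]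
    calc X * (1 ⊗ₖ F) = (V ⊗ₖ W)ᴴ * (U * (1 ⊗ₖ F)) := by rw [hXdef, Matrix.mul_assoc]
      _ = ((Vᴴ * 1) ⊗ₖ (Wᴴ * ψ F)) * U := by
          rw [hUF, kron_ct, ← Matrix.mul_assoc, Matrix.mul_kronecker_mul]
      _ = ((1 * Vᴴ) ⊗ₖ (F * Wᴴ)) * U := by rw [hWF, Matrix.mul_one, Matrix.one_mul]
      _ = (1 ⊗ₖ F) * X := by
          rw [Matrix.mul_kronecker_mul, hXdef, kron_ct, Matrix.mul_assoc]
  -- X commutes with all standard basis matrices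
  have hstd : ∀ (p q : Fin m × Fin n), Matrix.single p q (1 : ℂ)
      = Matrix.single p.1 q.1 1 ⊗ₖ Matrix.single p.2 q.2 1 := by
    rintro ⟨i, k⟩ ⟨j, l⟩
    ext ⟨a, b⟩ ⟨c, d⟩
    simp only [Matrix.single, Matrix.of_apply, Matrix.kroneckerMap_apply,
      Prod.mk.injEq]
    by_cases h1 : i = a <;> by_cases h2 : k = b <;> by_cases h3 : j = c <;>
      by_cases h4 : l = d <;> simp [h1, h2, h3, h4]
  have hcommAll : ∀ p q : Fin m × Fin n, Commute (Matrix.single p q (1 : ℂ)) X := by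
    intro p q
    have key : X * Matrix.single p q 1 = Matrix.single p q 1 * X := by
      rw [hstd]
      have hsplit : (Matrix.single p.1 q.1 (1 : ℂ)) ⊗ₖ
          (Matrix.single p.2 q.2 (1 : ℂ))
          = (Matrix.single p.1 q.1 1 ⊗ₖ (1 : Matrix (Fin n) (Fin n) ℂ))
            * ((1 : Matrix (Fin m) (Fin m) ℂ) ⊗ₖ Matrix.single p.2 q.2 1) := by
        rw [← Matrix.mul_kronecker_mul, Matrix.mul_one, Matrix.one_mul]
      rw [hsplit]
      calc X * (Matrix.single p.1 q.1 1 ⊗ₖ (1 : Matrix (Fin n) (Fin n) ℂ)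
              * ((1 : Matrix (Fin m) (Fin m) ℂ) ⊗ₖ Matrix.single p.2 q.2 1))
          = X * (Matrix.single p.1 q.1 1 ⊗ₖ (1 : Matrix (Fin n) (Fin n) ℂ))
              * ((1 : Matrix (Fin m) (Fin m) ℂ) ⊗ₖ Matrix.single p.2 q.2 1) :=
            (Matrix.mul_assoc _ _ _).symm
        _ = (Matrix.single p.1 q.1 1 ⊗ₖ (1 : Matrix (Fin n) (Fin n) ℂ))
              * (X * ((1 : Matrix (Fin m) (Fin m) ℂ) ⊗ₖ Matrix.single p.2 q.2 1)) := by
            rw [hcomm1, Matrix.mul_assoc]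
        _ = (Matrix.single p.1 q.1 1 ⊗ₖ (1 : Matrix (Fin n) (Fin n) ℂ))
              * (((1 : Matrix (Fin m) (Fin m) ℂ) ⊗ₖ Matrix.single p.2 q.2 1) * X) := by
            rw [hcomm2]
        _ = (Matrix.single p.1 q.1 1 ⊗ₖ (1 : Matrix (Fin n) (Fin n) ℂ)
              * ((1 : Matrix (Fin m) (Fin m) ℂ) ⊗ₖ Matrix.single p.2 q.2 1)) * X :=
            (Matrix.mul_assoc _ _ _).symm
    exact key.symm
  obtain ⟨lam, hlam⟩ := Matrix.mem_range_scalar_of_commute_single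
    (fun p q _ => hcommAll p q)
  have hX : X = lam • 1 := by
    rw [← hlam, Matrix.scalar_apply, Matrix.smul_one_eq_diagonal]
  -- X is unitary, so |lam| = 1
  have hkronV : (V ⊗ₖ W)ᴴ * (V ⊗ₖ W) = 1 := by
    rw [kron_ct, ← Matrix.mul_kronecker_mul, hVl, hWl, Matrix.one_kronecker_one]
  have hkronV' : (V ⊗ₖ W) * (V ⊗ₖ W)ᴴ = 1 := by
    rw [kron_ct, ← Matrix.mul_kronecker_mul, hVr, hWr, Matrix.one_kronecker_one]
  have hXU : Xᴴ * X = 1 := by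
    rw [hXdef, Matrix.conjTranspose_mul, Matrix.conjTranspose_conjTranspose,
      Matrix.mul_assoc, ← Matrix.mul_assoc (V ⊗ₖ W), hkronV', Matrix.one_mul, hUl]
  have hlam1 : star lam * lam = 1 := by
    rw [hX] at hXU
    have h1 : (star lam * lam) • (1 : Matrix (Fin m × Fin n) (Fin m × Fin n) ℂ) = 1 := by
      calc (star lam * lam) • (1 : Matrix (Fin m × Fin n) (Fin m × Fin n) ℂ)
          = (lam • (1 : Matrix (Fin m × Fin n) (Fin m × Fin n) ℂ))ᴴ * (lam • 1) := by
            rw [Matrix.conjTranspose_smul, Matrix.conjTranspose_one, Matrix.smul_mul,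
              Matrix.mul_smul, Matrix.one_mul, smul_smul]
        _ = 1 := hXU
    have := Matrix.ext_iff.mpr h1 (⟨0, hm0⟩, ⟨0, hn0⟩) (⟨0, hm0⟩, ⟨0, hn0⟩)
    simpa [Matrix.one_apply] using this
  -- assemble
  refine ⟨lam • V, W, ?_, hWmem, ?_⟩
  · rw [Matrix.mem_unitaryGroup_iff', Matrix.star_eq_conjTranspose,
      Matrix.conjTranspose_smul, Matrix.smul_mul, Matrix.mul_smul, smul_smul, hVl,
      hlam1, one_smul]
  · have hU' : U = (V ⊗ₖ W) * X := by
      rw [hXdef, ← Matrix.mul_assoc, hkronV', Matrix.one_mul]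
    rw [hU', hX, Matrix.mul_smul, Matrix.mul_one, Matrix.smul_kronecker]
end

section
/- Let H be a Hermitian operator on ℂⁿ, let L₁,…,L_k be operators, and set the effective Hamiltonian H_e = H - (i/2) Σⱼ Lⱼ†Lⱼ. If there exists a Hermitian positive-definite G with H_e†G = GH_e, then tr(G · Σⱼ Lⱼ†Lⱼ) = 0, and hence Lⱼ = 0 for all j; i.e. a quasi-Hermitian effective Lindblad Hamiltonian forces all jump operators to vanish. -/
open Matrix ComplexOrder

private lemma diag_eq {n : ℕ} (G : Matrix (Fin n) (Fin n) ℂ)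
    (L : Matrix (Fin n) (Fin n) ℂ) (i : Fin n) :
    (L * G * Lᴴ) i i
      = dotProduct (star (fun b => star (L i b))) (G *ᵥ (fun b => star (L i b))) := by
  simp only [Matrix.mul_apply, dotProduct, mulVec, conjTranspose_apply, Pi.star_apply,
    star_star, Finset.sum_mul, Finset.mul_sum]
  rw [Finset.sum_comm]
  exact Finset.sum_congr rfl fun a _ => Finset.sum_congr rfl fun b _ => by ring

private lemma diag_nonneg {n : ℕ} {G : Matrix (Fin n) (Fin n) ℂ} (hG : G.PosDef)
    (L : Matrix (Fin n) (Fin n) ℂ) (i : Fin n) :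
    0 ≤ (L * G * Lᴴ) i i := by
  rw [diag_eq]
  exact hG.posSemidef.dotProduct_mulVec_nonneg _

/-- If the effective Lindblad Hamiltonian H_e = H - (i/2)ΣⱼLⱼ†Lⱼ (H Hermitian)
is quasi-Hermitian with respect to a Hermitian positive-definite G, then
tr(G·ΣⱼLⱼ†Lⱼ) = 0 and all jump operators vanish. -/
theorem stmt16 (n k : ℕ) (H : Matrix (Fin n) (Fin n) ℂ) (hH : H.IsHermitian)
    (L : Fin k → Matrix (Fin n) (Fin n) ℂ)
    (G : Matrix (Fin n) (Fin n) ℂ) (hG : G.PosDef)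
    (h : (H - (Complex.I / 2) • ∑ j, (L j)ᴴ * L j)ᴴ * G
        = G * (H - (Complex.I / 2) • ∑ j, (L j)ᴴ * L j)) :
    (G * ∑ j, (L j)ᴴ * L j).trace = 0 ∧ ∀ j, L j = 0 := by
  set K : Matrix (Fin n) (Fin n) ℂ := ∑ j, (L j)ᴴ * L j with hK
  have hKh : Kᴴ = K := by
    simp [hK, conjTranspose_sum, Matrix.conjTranspose_mul]
  have hc : star (Complex.I / 2) = -(Complex.I / 2) := by
    rw [star_div₀, Complex.star_def, Complex.conj_I, neg_div, map_ofNat]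
  have h' : (H + (Complex.I / 2) • K) * G = G * (H - (Complex.I / 2) • K) := by
    rw [← h, conjTranspose_sub, conjTranspose_smul, hKh, hH.eq, hc, neg_smul, sub_neg_eq_add]
  have htr : (G * K).trace = 0 := by
    have h1 := congrArg Matrix.trace h'
    rw [add_mul, Matrix.mul_sub, smul_mul_assoc, Matrix.mul_smul, trace_add, trace_sub,
      trace_smul, trace_smul, trace_mul_comm H G, trace_mul_comm K G, smul_eq_mul] at h1
    have h2 : Complex.I * (G * K).trace = 0 := by linear_combination h1
    exact (mul_eq_zero.mp h2).resolve_left Complex.I_ne_zero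
  refine ⟨htr, ?_⟩
  have htr2 : ∑ j, ∑ i, (L j * G * (L j)ᴴ) i i = 0 := by
    have : ∑ j, (L j * G * (L j)ᴴ).trace = 0 := by
      calc ∑ j, (L j * G * (L j)ᴴ).trace
          = ∑ j, (G * ((L j)ᴴ * L j)).trace := by
            refine Finset.sum_congr rfl fun j _ => ?_
            rw [trace_mul_comm (L j * G) ((L j)ᴴ), ← Matrix.mul_assoc, trace_mul_comm]
        _ = (G * K).trace := by rw [hK, Finset.mul_sum, trace_sum]
        _ = 0 := htr
    simpa [Matrix.trace] using this
  have hterm : ∀ j ∈ Finset.univ, ∀ i ∈ Finset.univ,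
      (L (j : Fin k) * G * (L j)ᴴ) (i : Fin n) i = 0 := by
    have hnn : ∀ j ∈ (Finset.univ : Finset (Fin k)),
        0 ≤ ∑ i, (L j * G * (L j)ᴴ) i i :=
      fun j _ => Finset.sum_nonneg fun i _ => diag_nonneg hG (L j) i
    intro j hj i hi
    have hj0 : ∑ i, (L j * G * (L j)ᴴ) i i = 0 :=
      (Finset.sum_eq_zero_iff_of_nonneg hnn).mp htr2 j hj
    exact (Finset.sum_eq_zero_iff_of_nonneg
      (fun i _ => diag_nonneg hG (L j) i)).mp hj0 i hi
  intro j
  ext i a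
  by_contra hne
  have hw : (fun b => star (L j i b)) ≠ 0 := by
    intro h0
    have := congrFun h0 a
    simp at this
    exact hne (by simpa using this)
  have hpos := hG.dotProduct_mulVec_pos hw
  have heq := diag_eq G (L j) i
  rw [hterm j (Finset.mem_univ j) i (Finset.mem_univ i)] at heq
  rw [← heq] at hpos
  exact lt_irrefl _ hpos
end

section
/- If H is a linear operator on ℂⁿ admitting a Hermitian positive-definite G with H†G = GH, then H is diagonalizable (similar to a real diagonal matrix); specifically η H η⁻¹ is Hermitian for η the positive square root of G, so H = η⁻¹(ηHη⁻¹)η is similar to a Hermitian matrix. -/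
open Matrix ComplexOrder

set_option maxHeartbeats 1000000 in
/-- A quasi-Hermitian operator is similar to a real diagonal matrix. -/
theorem stmt19 (n : ℕ) (H G : Matrix (Fin n) (Fin n) ℂ) (hG : G.PosDef)
    (h : Hᴴ * G = G * H) :
    ∃ (P : Matrix (Fin n) (Fin n) ℂ) (d : Fin n → ℝ),
      IsUnit P.det ∧
      H = P⁻¹ * Matrix.diagonal (fun i => (d i : ℂ)) * P := by
  open MatrixOrder in
  set η := CFC.sqrt G with hηdef
  open MatrixOrder in
  have hηherm : η.IsHermitian := (CFC.sqrt_nonneg G).posSemidef.1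
  open MatrixOrder in
  have hηsq : η * η = G := CFC.sqrt_mul_sqrt_self G hG.posSemidef.nonneg
  have hGunit : IsUnit G.det := hG.det_pos.ne'.isUnit
  have hηunit : IsUnit η.det := by
    have hd : η.det * η.det = G.det := by rw [← det_mul, hηsq]
    exact isUnit_of_mul_isUnit_left (hd ▸ hGunit)
  haveI : Invertible η := η.invertibleOfIsUnitDet hηunit
  have hinv1 : η⁻¹ * η = 1 := nonsing_inv_mul η hηunit
  have hinv2 : η * η⁻¹ = 1 := mul_nonsing_inv η hηunit
  have hηinvherm : (η⁻¹)ᴴ = η⁻¹ := by rw [conjTranspose_nonsing_inv, hηherm.eq]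
  have h2 : Hᴴ * η * η = η * (η * H) := by
    rw [mul_assoc Hᴴ, hηsq, h, ← hηsq, mul_assoc]
  have key : η⁻¹ * (Hᴴ * η) = η * H * η⁻¹ := by
    rw [inv_mul_eq_iff_eq_mul_of_invertible, ← mul_assoc, ← h2,
      mul_assoc (Hᴴ * η), hinv2, mul_one]
  have hA : (η * H * η⁻¹).IsHermitian := by
    rw [IsHermitian, conjTranspose_mul, conjTranspose_mul, hηinvherm, hηherm.eq]
    exact key
  set U := (hA.eigenvectorUnitary : Matrix (Fin n) (Fin n) ℂ) with hU
  have hUs : star U * U = 1 := Unitary.star_mul_self_of_mem hA.eigenvectorUnitary.2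
  have hUs2 : U * star U = 1 := Unitary.mul_star_self_of_mem hA.eigenvectorUnitary.2
  refine ⟨star U * η, hA.eigenvalues, ?_, ?_⟩
  · rw [det_mul]
    refine (IsUnit.of_mul_eq_one (a := (star U).det) U.det ?_).mul hηunit
    rw [← det_mul, hUs, det_one]
  · have hPinv : (star U * η)⁻¹ = η⁻¹ * U := by
      apply inv_eq_right_inv
      rw [mul_assoc, ← mul_assoc η, hinv2, one_mul, hUs]
    rw [hPinv]
    have hdiag : Matrix.diagonal (fun i => (hA.eigenvalues i : ℂ)) =
        Matrix.diagonal (RCLike.ofReal ∘ hA.eigenvalues) := rfl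
    have hassoc : (η⁻¹ * U) * Matrix.diagonal (RCLike.ofReal ∘ hA.eigenvalues) * (star U * η)
        = η⁻¹ * (U * Matrix.diagonal (RCLike.ofReal ∘ hA.eigenvalues) * star U) * η := by
      noncomm_ring
    rw [hdiag, hassoc, hU, ← Unitary.conjStarAlgAut_apply (S := ℂ), ← hA.spectral_theorem]
    simp [mul_assoc, Matrix.inv_mul_cancel_left_of_invertible, hinv1]
end
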